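/- Union bound with exchangeability for the key events: fix 0<μ<1, n ≥ 2, 2 ≤ K_n < n, and integers k ≥ 2 and 0 ≤ ℓ ≤ k−1. In H(n;μ,K_n), let δ be the minimum node degree and κ_v the vertex connectivity. For 2 ≤ r ≤ ⌊(n−ℓ)/2⌋ let A_{ℓ,r} := B ∩ C ∩ D, where, with U = {v_1,…,v_ℓ} and T = {v_{ℓ+1},…,v_{ℓ+r}}: B is the event that every node of U is adjacent to some node of T, C is the event that the induced subgraph on T is connected, and D is the event that there is no edge between T and {v_{ℓ+r+1},…,v_n}. Then P[ δ > ℓ and κ_v = ℓ ] ≤ Σ_{r=2}^{⌊(n−ℓ)/2⌋} C(n,ℓ) · C(n−ℓ,r) · P[A_{ℓ,r}]. -/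

import Mathlib

open Finset Filter Asymptotics

namespace KOut

/-- A configuration: for each node, its type (`true` = type-1, `false` = type-2)
and the set of nodes it selects. -/
abbrev Config (n : ℕ) := (Fin n → Bool) × (Fin n → Finset (Fin n))

/-- Probability density of a configuration in the inhomogeneous random K-out graph
model `H(n; μ, K)`: each node is independently type-1 with probability `μ` (type-2 with
probability `1-μ`), and, given its type, its selection set is uniform among the subsets
of the other `n-1` nodes of size `1` (type-1) resp. `K` (type-2). -/
noncomputable def density (n : ℕ) (μ : ℝ) (K : ℕ) (ω : Config n) : ℝ :=
  ∏ i : Fin n,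
    ((if ω.1 i then μ else 1 - μ) *
      (if i ∉ ω.2 i ∧ (ω.2 i).card = (if ω.1 i then 1 else K)
       then ((n - 1).choose (if ω.1 i then 1 else K) : ℝ)⁻¹ else 0))

/-- Probability of an event in `H(n; μ, K)`. -/
noncomputable def prob (n : ℕ) (μ : ℝ) (K : ℕ) (E : Set (Config n)) : ℝ :=
  ∑ ω : Config n, Set.indicator E (density n μ K) ω

/-- The (undirected) graph associated with a configuration: an edge joins two distinct
nodes iff at least one of them selects the other. -/
def graph {n : ℕ} (ω : Config n) : SimpleGraph (Fin n) where
  Adj i j := i ≠ j ∧ (j ∈ ω.2 i ∨ i ∈ ω.2 j)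
  symm := ⟨fun _ _ h => ⟨h.1.symm, h.2.symm⟩⟩
  loopless := ⟨fun _ h => h.1 rfl⟩

instance {n : ℕ} (ω : Config n) : DecidableRel (graph ω).Adj :=
  fun i j => inferInstanceAs (Decidable (i ≠ j ∧ (j ∈ ω.2 i ∨ i ∈ ω.2 j)))

/-- The mean number of selections `⟨K_n⟩ = μ + (1-μ) K_n`. -/
noncomputable def avgK (μ : ℝ) (K : ℕ) : ℝ := μ + (1 - μ) * K

/-- Vertex connectivity: the minimum number of vertices whose removal disconnects
the graph. -/
noncomputable def vertexConn {n : ℕ} (G : SimpleGraph (Fin n)) : ℕ :=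
  sInf {m | ∃ S : Finset (Fin n), S.card = m ∧ ¬ (G.induce ((↑S : Set (Fin n))ᶜ)).Connected}

/-- `B`: the event that every node of `U = {v_1,…,v_ℓ}` is adjacent to some node of
`T = {v_{ℓ+1},…,v_{ℓ+r}}`. -/
def eventB (n ℓ r : ℕ) : Set (Config n) :=
  {ω | ∀ i : Fin n, (i : ℕ) < ℓ →
    ∃ j : Fin n, ℓ ≤ (j : ℕ) ∧ (j : ℕ) < ℓ + r ∧ (graph ω).Adj i j}

/-- `C`: the event that the subgraph induced on `T = {v_{ℓ+1},…,v_{ℓ+r}}` is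
connected. -/
def eventC (n ℓ r : ℕ) : Set (Config n) :=
  {ω | ((graph ω).induce {v : Fin n | ℓ ≤ (v : ℕ) ∧ (v : ℕ) < ℓ + r}).Connected}

/-- `X_t`: the event that every node in `T = {v_{ℓ+1},…,v_{ℓ+r}}` has type `t`
(`true` = type-1, `false` = type-2). -/
def eventX (n ℓ r : ℕ) (t : Bool) : Set (Config n) :=
  {ω | ∀ j : Fin n, ℓ ≤ (j : ℕ) → (j : ℕ) < ℓ + r → ω.1 j = t}

/-- The value `K_t`, with `K_1 = 1` (type-1, `t = true`) and `K_2 = K` (type-2,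
`t = false`). -/
def Ktype (K : ℕ) (t : Bool) : ℕ := if t then 1 else K

/-- `D`: the event that there is no edge between `T = {v_{ℓ+1},…,v_{ℓ+r}}` and
`{v_{ℓ+r+1},…,v_n}`. -/
def eventD (n ℓ r : ℕ) : Set (Config n) :=
  {ω | ∀ i : Fin n, ℓ ≤ (i : ℕ) → (i : ℕ) < ℓ + r →
    ∀ j : Fin n, ℓ + r ≤ (j : ℕ) → ¬ (graph ω).Adj i j}


/-! ### Part 1: permutation action and exchangeability -/

variable {n : ℕ}

/-- Relabelling action of a permutation on configurations. -/
def act (σ : Equiv.Perm (Fin n)) (ω : Config n) : Config n :=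
  (fun i => ω.1 (σ.symm i), fun i => (ω.2 (σ.symm i)).image σ)

lemma mem_image_perm {σ : Equiv.Perm (Fin n)} {s : Finset (Fin n)} {a : Fin n} :
    a ∈ s.image σ ↔ σ.symm a ∈ s := by
  simp only [Finset.mem_image]
  constructor
  · rintro ⟨b, hb, rfl⟩; simpa using hb
  · intro h; exact ⟨σ.symm a, h, by simp⟩

lemma graph_act (σ : Equiv.Perm (Fin n)) (ω : Config n) {i j : Fin n} :
    (graph (act σ ω)).Adj i j ↔ (graph ω).Adj (σ.symm i) (σ.symm j) := by
  show (i ≠ j ∧ _) ↔ (σ.symm i ≠ σ.symm j ∧ _)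
  simp only [act, mem_image_perm, Equiv.symm_apply_apply, Ne, EmbeddingLike.apply_eq_iff_eq,
    Equiv.symm_apply_eq]

lemma density_act (σ : Equiv.Perm (Fin n)) (μ : ℝ) (K : ℕ) (ω : Config n) :
    density n μ K (act σ ω) = density n μ K ω := by
  unfold density
  rw [← Equiv.prod_comp σ.symm
    (fun i => ((if ω.1 i then μ else 1 - μ) *
      (if i ∉ ω.2 i ∧ (ω.2 i).card = (if ω.1 i then 1 else K)
       then ((n - 1).choose (if ω.1 i then 1 else K) : ℝ)⁻¹ else 0)))]
  apply Finset.prod_congr rfl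
  intro i _
  simp only [act, mem_image_perm, Equiv.symm_apply_apply,
    Finset.card_image_of_injective _ σ.injective]
  congr 1

/-- `act σ` as an equivalence of configuration spaces. -/
def actEquiv (σ : Equiv.Perm (Fin n)) : Config n ≃ Config n where
  toFun := act σ
  invFun := act σ.symm
  left_inv := by
    intro ω
    ext i x
    · simp [act]
    · simp [act, mem_image_perm]
  right_inv := by
    intro ω
    ext i x
    · simp [act]
    · simp [act, mem_image_perm]

lemma prob_act_preimage (σ : Equiv.Perm (Fin n)) (μ : ℝ) (K : ℕ) (E : Set (Config n)) :
    prob n μ K (act σ ⁻¹' E) = prob n μ K E := by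
  unfold prob
  rw [← Equiv.sum_comp (actEquiv σ) (Set.indicator E (density n μ K))]
  apply Finset.sum_congr rfl
  intro ω _
  have hcoe : (actEquiv σ) ω = act σ ω := rfl
  rw [hcoe]
  by_cases h : act σ ω ∈ E
  · rw [Set.indicator_of_mem h, Set.indicator_of_mem (show ω ∈ act σ ⁻¹' E from h),
      density_act]
  · rw [Set.indicator_of_notMem h, Set.indicator_of_notMem (show ω ∉ act σ ⁻¹' E from h)]

/-! ### Part 2: basic properties of `prob` -/

lemma density_nonneg {μ : ℝ} (h0 : 0 ≤ μ) (h1 : μ ≤ 1) (K : ℕ) (ω : Config n) :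
    0 ≤ density n μ K ω := by
  unfold density
  apply Finset.prod_nonneg
  intro i _
  apply mul_nonneg
  · split <;> linarith
  · split <;> first | positivity | (split <;> positivity)

lemma prob_mono {μ : ℝ} (h0 : 0 ≤ μ) (h1 : μ ≤ 1) (K : ℕ) {E F : Set (Config n)}
    (hEF : E ⊆ F) : prob n μ K E ≤ prob n μ K F := by
  unfold prob
  apply Finset.sum_le_sum
  intro ω _
  by_cases h : ω ∈ E
  · rw [Set.indicator_of_mem h, Set.indicator_of_mem (hEF h)]
  · rw [Set.indicator_of_notMem h]
    by_cases h' : ω ∈ F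
    · rw [Set.indicator_of_mem h']; exact density_nonneg h0 h1 K ω
    · rw [Set.indicator_of_notMem h']

lemma prob_nonneg {μ : ℝ} (h0 : 0 ≤ μ) (h1 : μ ≤ 1) (K : ℕ) (E : Set (Config n)) :
    0 ≤ prob n μ K E := by
  unfold prob
  apply Finset.sum_nonneg
  intro ω _
  exact Set.indicator_nonneg (fun ω' _ => density_nonneg h0 h1 K ω') ω

lemma prob_biUnion_le {ι : Type*} {μ : ℝ} (h0 : 0 ≤ μ) (h1 : μ ≤ 1) (K : ℕ)
    (s : Finset ι) (E : ι → Set (Config n)) :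
    prob n μ K (⋃ x ∈ s, E x) ≤ ∑ x ∈ s, prob n μ K (E x) := by
  unfold prob
  rw [Finset.sum_comm]
  apply Finset.sum_le_sum
  intro ω _
  by_cases h : ω ∈ ⋃ x ∈ s, E x
  · rw [Set.indicator_of_mem h]
    obtain ⟨x, hx, hωx⟩ := Set.mem_iUnion₂.1 h
    calc density n μ K ω = Set.indicator (E x) (density n μ K) ω := by
          rw [Set.indicator_of_mem hωx]
      _ ≤ ∑ x ∈ s, Set.indicator (E x) (density n μ K) ω := by
          apply Finset.single_le_sum (fun i _ => ?_) hx
          exact Set.indicator_nonneg (fun ω' _ => density_nonneg h0 h1 K ω') ω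
  · rw [Set.indicator_of_notMem h]
    apply Finset.sum_nonneg
    intro x _
    exact Set.indicator_nonneg (fun ω' _ => density_nonneg h0 h1 K ω') ω

/-! ### Part 3: walks avoiding a set, and induced subgraphs -/

section Walks

variable {V : Type*} [DecidableEq V] {G : SimpleGraph V}

/-- Reachability by a walk all of whose vertices avoid `S`. -/
def AvoidReach (G : SimpleGraph V) (S : Finset V) (v u : V) : Prop :=
  ∃ p : G.Walk v u, ∀ x ∈ p.support, x ∉ S

lemma AvoidReach.refl {S : Finset V} {v : V} (hv : v ∉ S) : AvoidReach G S v v :=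
  ⟨SimpleGraph.Walk.nil, by simpa using hv⟩

lemma AvoidReach.not_start_mem {S : Finset V} {v u : V} (h : AvoidReach G S v u) : v ∉ S := by
  obtain ⟨p, hp⟩ := h; exact hp v p.start_mem_support

lemma AvoidReach.not_end_mem {S : Finset V} {v u : V} (h : AvoidReach G S v u) : u ∉ S := by
  obtain ⟨p, hp⟩ := h; exact hp u p.end_mem_support

lemma AvoidReach.symm {S : Finset V} {v u : V} (h : AvoidReach G S v u) : AvoidReach G S u v := by
  obtain ⟨p, hp⟩ := h
  exact ⟨p.reverse, by simpa using hp⟩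

lemma AvoidReach.trans {S : Finset V} {v u w : V} (h : AvoidReach G S v u)
    (h' : AvoidReach G S u w) : AvoidReach G S v w := by
  obtain ⟨p, hp⟩ := h
  obtain ⟨q, hq⟩ := h'
  refine ⟨p.append q, fun x hx => ?_⟩
  rcases (SimpleGraph.Walk.mem_support_append_iff p q).1 hx with hx | hx
  exacts [hp x hx, hq x hx]

lemma AvoidReach.step {S : Finset V} {v u w : V} (h : AvoidReach G S v u)
    (hadj : G.Adj u w) (hw : w ∉ S) : AvoidReach G S v w := by
  obtain ⟨p, hp⟩ := h
  refine ⟨p.concat hadj, fun x hx => ?_⟩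
  rw [SimpleGraph.Walk.support_concat, List.mem_append] at hx
  rcases hx with hx | hx
  · exact hp x hx
  · simp only [List.mem_singleton] at hx
    subst hx; exact hw

lemma AvoidReach.of_mem_support {S : Finset V} {v u x : V} (h : AvoidReach G S v u)
    (hp : ∃ p : G.Walk v u, (∀ y ∈ p.support, y ∉ S) ∧ x ∈ p.support) :
    AvoidReach G S v x := by
  obtain ⟨p, hps, hx⟩ := hp
  exact ⟨p.takeUntil x hx, fun y hy => hps y (p.support_takeUntil_subset hx hy)⟩

/-- A walk in an induced subgraph gives a walk in the ambient graph with support in the set. -/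
lemma walk_of_induce {s : Set V} :
    ∀ {x y : s}, (G.induce s).Walk x y →
      ∃ p : G.Walk (x : V) (y : V), ∀ z ∈ p.support, z ∈ s := by
  intro x y q
  induction q with
  | @nil a => exact ⟨SimpleGraph.Walk.nil, by rintro z hz; simp at hz; subst hz; exact a.2⟩
  | @cons a b c h q ih =>
    obtain ⟨p, hp⟩ := ih
    have hadj : G.Adj (a : V) (b : V) := h
    refine ⟨SimpleGraph.Walk.cons hadj p, fun z hz => ?_⟩
    rw [SimpleGraph.Walk.support_cons, List.mem_cons] at hz
    rcases hz with rfl | hz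
    exacts [a.2, hp z hz]

/-- Conversely, a walk with support inside `s` gives reachability in the induced graph. -/
lemma induce_reachable_of_walk {s : Set V} :
    ∀ {x y : V} (p : G.Walk x y) (hx : x ∈ s) (hy : y ∈ s), (∀ z ∈ p.support, z ∈ s) →
      (G.induce s).Reachable ⟨x, hx⟩ ⟨y, hy⟩ := by
  intro x y p
  induction p with
  | nil =>
    intro hx hy _
    exact SimpleGraph.Reachable.refl _
  | @cons u v w h q ih =>
    intro hx hy hs
    have hb : v ∈ s := hs v (by simp)
    refine SimpleGraph.Reachable.trans ?_ (ih hb hy (fun z hz => hs z (by simp [hz])))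
    exact SimpleGraph.Adj.reachable (show (G.induce s).Adj ⟨u, hx⟩ ⟨v, hb⟩ from h)

end Walks

/-! ### Part 4: the key structural lemma -/

lemma avoidReach_iff {V : Type*} [DecidableEq V] {G : SimpleGraph V} (S : Finset V)
    {a b : V} (ha : a ∉ S) (hb : b ∉ S) :
    AvoidReach G S a b ↔
      (G.induce ((↑S : Set V)ᶜ)).Reachable ⟨a, by simpa using ha⟩ ⟨b, by simpa using hb⟩ := by
  constructor
  · rintro ⟨p, hp⟩
    exact induce_reachable_of_walk p (by simpa using ha) (by simpa using hb)
      (fun z hz => by simpa using hp z hz)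
  · rintro ⟨q⟩
    obtain ⟨p, hp⟩ := walk_of_induce q
    exact ⟨p, fun z hz => by simpa using hp z hz⟩

open SimpleGraph in
lemma key_inclusion {n ℓ : ℕ} (hn : 0 < n) (G : SimpleGraph (Fin n)) [DecidableRel G.Adj]
    (hδ : ℓ < G.minDegree) (hκ : vertexConn G = ℓ) :
    ∃ r, 2 ≤ r ∧ r ≤ (n - ℓ) / 2 ∧ ∃ S T : Finset (Fin n), S.card = ℓ ∧ T.card = r ∧
      Disjoint S T ∧ (∀ i ∈ S, ∃ j ∈ T, G.Adj i j) ∧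
      (G.induce (↑T : Set (Fin n))).Connected ∧
      (∀ i ∈ T, ∀ j, j ∉ S → j ∉ T → ¬ G.Adj i j) := by
  classical
  haveI : Nonempty (Fin n) := ⟨⟨0, hn⟩⟩
  rw [vertexConn] at hκ
  have hne : {m | ∃ S : Finset (Fin n), S.card = m ∧
      ¬ (G.induce ((↑S : Set (Fin n))ᶜ)).Connected}.Nonempty := by
    refine ⟨n, Finset.univ, by simp, fun hconn => ?_⟩
    obtain ⟨⟨x, hx⟩⟩ := hconn.nonempty
    simp at hx
  have hmem : ∃ S : Finset (Fin n), S.card = ℓ ∧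
      ¬ (G.induce ((↑S : Set (Fin n))ᶜ)).Connected := hκ ▸ Nat.sInf_mem hne
  obtain ⟨S, hScard, hSdisc⟩ := hmem
  have hmincut : ∀ S' : Finset (Fin n), S'.card < ℓ →
      (G.induce ((↑S' : Set (Fin n))ᶜ)).Connected := by
    intro S' h
    by_contra h'
    have h2 := Nat.sInf_le (show S'.card ∈ {m | ∃ S : Finset (Fin n), S.card = m ∧
      ¬ (G.induce ((↑S : Set (Fin n))ᶜ)).Connected} from ⟨S', rfl, h'⟩)
    omega
  -- extract two non-avoid-reachable vertices outside S
  have hab : ∃ a b : Fin n, a ∉ S ∧ b ∉ S ∧ ¬ AvoidReach G S a b := by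
    rw [SimpleGraph.connected_iff] at hSdisc
    rcases not_and_or.1 hSdisc with hP | hN
    · rw [SimpleGraph.Preconnected] at hP
      push_neg at hP
      obtain ⟨⟨a, ha⟩, ⟨b, hb⟩, hr⟩ := hP
      have ha' : a ∉ S := by simpa using ha
      have hb' : b ∉ S := by simpa using hb
      exact ⟨a, b, ha', hb', fun hav => hr ((avoidReach_iff S ha' hb').1 hav)⟩
    · exfalso
      have hSuniv : S = Finset.univ := by
        rw [Finset.eq_univ_iff_forall]
        intro x
        by_contra hx
        exact hN ⟨⟨x, by simpa using hx⟩⟩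
      have hℓn : ℓ = n := by rw [← hScard, hSuniv]; simp
      have h1 := G.minDegree_le_degree (Classical.arbitrary (Fin n))
      have h2 := G.degree_lt_card_verts (Classical.arbitrary (Fin n))
      rw [Fintype.card_fin] at h2
      omega
  obtain ⟨a, b, haS, hbS, hnr⟩ := hab
  set comp : Fin n → Finset (Fin n) :=
    fun v => Finset.univ.filter (AvoidReach G S v) with hcomp
  have hmemcomp : ∀ v x, x ∈ comp v ↔ AvoidReach G S v x := by
    intro v x; simp [hcomp]
  have hcompsub : ∀ v, ∀ x ∈ comp v, x ∉ S :=
    fun v x hx => ((hmemcomp v x).1 hx).not_end_mem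
  have hbase : ∀ v, v ∉ S → v ∈ comp v := fun v hv => (hmemcomp v v).2 (AvoidReach.refl hv)
  have hclosed : ∀ v, ∀ x ∈ comp v, ∀ y, G.Adj x y → y ∉ S → y ∈ comp v :=
    fun v x hx y hadj hy => (hmemcomp v y).2 (((hmemcomp v x).1 hx).step hadj hy)
  have h2card : ∀ v, v ∉ S → 2 ≤ (comp v).card := by
    intro v hv
    have hdeg : ℓ < G.degree v := lt_of_lt_of_le hδ (G.minDegree_le_degree v)
    have hnbhd : ¬ (G.neighborFinset v ⊆ S) := by
      intro hsub
      have hc := Finset.card_le_card hsub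
      have : G.degree v = (G.neighborFinset v).card := rfl
      omega
    obtain ⟨w, hwnb, hwS⟩ := Finset.not_subset.1 hnbhd
    have hadj : G.Adj v w := (G.mem_neighborFinset v w).1 hwnb
    have hw : w ∈ comp v := hclosed v v (hbase v hv) w hadj hwS
    exact Finset.one_lt_card.2 ⟨v, hbase v hv, w, hw, hadj.ne⟩
  -- choose the smaller of the two components
  obtain ⟨v, w, hvS, hwS', hnr', hle⟩ : ∃ v w : Fin n, v ∉ S ∧ w ∉ S ∧
      ¬ AvoidReach G S v w ∧ (comp v).card ≤ (comp w).card := by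
    rcases le_total (comp a).card (comp b).card with h | h
    · exact ⟨a, b, haS, hbS, hnr, h⟩
    · exact ⟨b, a, hbS, haS, fun hr => hnr hr.symm, h⟩
  have hdisj : Disjoint (comp v) (comp w) := by
    rw [Finset.disjoint_left]
    intro x hxv hxw
    exact hnr' (((hmemcomp v x).1 hxv).trans ((hmemcomp w x).1 hxw).symm)
  have hsum : (comp v).card + (comp w).card ≤ n - ℓ := by
    have hsub : comp v ∪ comp w ⊆ Sᶜ := by
      intro x hx
      rw [Finset.mem_compl]
      rcases Finset.mem_union.1 hx with hx | hx
      exacts [hcompsub v x hx, hcompsub w x hx]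
    have := Finset.card_le_card hsub
    rw [Finset.card_union_of_disjoint hdisj] at this
    rw [Finset.card_compl, Fintype.card_fin, hScard] at this
    exact this
  refine ⟨(comp v).card, h2card v hvS, ?_, S, comp v, hScard, rfl,
    Finset.disjoint_left.2 (fun x hx hx' => hcompsub v x hx' hx), ?_, ?_, ?_⟩
  · rw [Nat.le_div_iff_mul_le (by norm_num : 0 < 2)]
    have := h2card w hwS'
    omega
  · -- event B : every i ∈ S has a neighbour in comp v
    intro i hi
    by_contra hno
    push_neg at hno
    have hℓpos : 0 < ℓ := hScard ▸ Finset.card_pos.2 ⟨i, hi⟩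
    have hconn' := hmincut (S.erase i)
      (by rw [Finset.card_erase_of_mem hi, hScard]; omega)
    have hvS' : v ∉ S.erase i := fun h => hvS (Finset.mem_of_mem_erase h)
    have hwS'' : w ∉ S.erase i := fun h => hwS' (Finset.mem_of_mem_erase h)
    have hreach : AvoidReach G (S.erase i) v w :=
      (avoidReach_iff (S.erase i) hvS' hwS'').2 (hconn'.preconnected _ _)
    -- walks avoiding `S.erase i` starting in `comp v` stay in `comp v`
    have hstay : ∀ (x y : Fin n) (p : G.Walk x y),
        (∀ z ∈ p.support, z ∉ S.erase i) → x ∈ comp v → y ∈ comp v := by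
      intro x y p
      induction p with
      | nil => exact fun _ h => h
      | @cons x' m y' hadj q ih =>
        intro hsupp hx
        have hm : m ∉ S := by
          intro hmS
          have hmi : m = i := by
            by_contra hne'
            exact hsupp m (by simp) (Finset.mem_erase.2 ⟨hne', hmS⟩)
          subst hmi
          exact hno x' hx (hadj.symm)
        exact ih (fun z hz => hsupp z (by simp [hz])) (hclosed v x' hx m hadj hm)
    obtain ⟨p, hp⟩ := hreach
    have : w ∈ comp v := hstay v w p hp (hbase v hvS)
    exact (Finset.disjoint_left.1 hdisj this) (hbase w hwS')
  · -- event C : induced graph on comp v is connected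
    rw [SimpleGraph.connected_iff]
    refine ⟨?_, ⟨⟨v, by simpa using hbase v hvS⟩⟩⟩
    rintro ⟨x, hx⟩ ⟨y, hy⟩
    have hx' : x ∈ comp v := by simpa using hx
    have hy' : y ∈ comp v := by simpa using hy
    obtain ⟨p, hp⟩ := (hmemcomp v x).1 hx'
    obtain ⟨q, hq⟩ := (hmemcomp v y).1 hy'
    have hall : ∀ z ∈ (p.reverse.append q).support, z ∈ (↑(comp v) : Set (Fin n)) := by
      intro z hz
      rcases (SimpleGraph.Walk.mem_support_append_iff _ _).1 hz with hz | hz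
      · rw [SimpleGraph.Walk.support_reverse, List.mem_reverse] at hz
        exact (hmemcomp v z).2 (AvoidReach.of_mem_support ((hmemcomp v x).1 hx')
          ⟨p, hp, hz⟩)
      · exact (hmemcomp v z).2 (AvoidReach.of_mem_support ((hmemcomp v y).1 hy')
          ⟨q, hq, hz⟩)
    exact induce_reachable_of_walk (p.reverse.append q) hx hy hall
  · -- event D : no edges from comp v to the rest
    intro i hi j hjS hjT hadj
    exact hjT (hclosed v i hi j hadj hjS)

/-! ### Part 5: existence of a permutation matching two disjoint pairs of finsets -/

lemma exists_perm {α : Type*} [Fintype α] [DecidableEq α] (S T A B : Finset α)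
    (hST : Disjoint S T) (hAB : Disjoint A B) (h1 : S.card = A.card) (h2 : T.card = B.card) :
    ∃ σ : Equiv.Perm α, (∀ x, σ x ∈ A ↔ x ∈ S) ∧ (∀ x, σ x ∈ B ↔ x ∈ T) := by
  classical
  have hST' : Disjoint (↑S : Set α) ↑T := by rwa [Finset.disjoint_coe]
  have hAB' : Disjoint (↑A : Set α) ↑B := by rwa [Finset.disjoint_coe]
  let e1 : ↥(↑S : Set α) ≃ ↥(↑A : Set α) := Fintype.equivOfCardEq (by simpa using h1)
  let e2 : ↥(↑T : Set α) ≃ ↥(↑B : Set α) := Fintype.equivOfCardEq (by simpa using h2)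
  let eIn : ↥((↑S : Set α) ∪ ↑T) ≃ ↥((↑A : Set α) ∪ ↑B) :=
    (Equiv.Set.union hST').trans ((e1.sumCongr e2).trans (Equiv.Set.union hAB').symm)
  have hcard : Fintype.card ↥(((↑S : Set α) ∪ ↑T)ᶜ) = Fintype.card ↥(((↑A : Set α) ∪ ↑B)ᶜ) := by
    rw [Fintype.card_compl_set, Fintype.card_compl_set]
    congr 1
    rw [Fintype.card_congr (Equiv.Set.union hST'), Fintype.card_congr (Equiv.Set.union hAB'),
      Fintype.card_sum, Fintype.card_sum]
    simp [h1, h2]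
  let eOut : ↥(((↑S : Set α) ∪ ↑T)ᶜ) ≃ ↥(((↑A : Set α) ∪ ↑B)ᶜ) := Fintype.equivOfCardEq hcard
  set σ : Equiv.Perm α := (Equiv.Set.sumCompl ((↑S : Set α) ∪ ↑T)).symm.trans
    ((eIn.sumCongr eOut).trans (Equiv.Set.sumCompl ((↑A : Set α) ∪ ↑B))) with hσ
  have hSfact : ∀ x, x ∈ S → σ x ∈ A := by
    intro x hx
    have hx1 : x ∈ ((↑S : Set α) ∪ ↑T) := Or.inl hx
    have e0 : (Equiv.Set.sumCompl ((↑S : Set α) ∪ ↑T)).symm x = Sum.inl ⟨x, hx1⟩ :=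
      Equiv.Set.sumCompl_symm_apply_of_mem hx1
    have hσx : σ x = ↑(eIn ⟨x, hx1⟩) := by
      simp [hσ, e0, Equiv.sumCongr_apply, Equiv.Set.sumCompl_apply_inl]
    rw [hσx]
    have : ((eIn ⟨x, hx1⟩ : ↥((↑A : Set α) ∪ ↑B)) : α) ∈ (↑A : Set α) := by
      simp only [eIn, Equiv.trans_apply]
      rw [Equiv.Set.union_apply_left hST'
        (show ((⟨x, hx1⟩ : ↥((↑S : Set α) ∪ ↑T)) : α) ∈ (↑S : Set α) from hx)]
      simp only [Equiv.sumCongr_apply, Sum.map_inl]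
      rw [Equiv.Set.union_symm_apply_left]
      exact (e1 ⟨x, hx⟩).2
    exact this
  have hTfact : ∀ x, x ∈ T → σ x ∈ B := by
    intro x hx
    have hx1 : x ∈ ((↑S : Set α) ∪ ↑T) := Or.inr hx
    have e0 : (Equiv.Set.sumCompl ((↑S : Set α) ∪ ↑T)).symm x = Sum.inl ⟨x, hx1⟩ :=
      Equiv.Set.sumCompl_symm_apply_of_mem hx1
    have hσx : σ x = ↑(eIn ⟨x, hx1⟩) := by
      simp [hσ, e0, Equiv.sumCongr_apply, Equiv.Set.sumCompl_apply_inl]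
    rw [hσx]
    have hxT' : ((⟨x, hx1⟩ : ↥((↑S : Set α) ∪ ↑T)) : α) ∈ (↑T : Set α) := hx
    have : ((eIn ⟨x, hx1⟩ : ↥((↑A : Set α) ∪ ↑B)) : α) ∈ (↑B : Set α) := by
      simp only [eIn, Equiv.trans_apply]
      rw [Equiv.Set.union_apply_right hST' hxT']
      simp only [Equiv.sumCongr_apply, Sum.map_inr]
      rw [Equiv.Set.union_symm_apply_right]
      exact (e2 ⟨x, hx⟩).2
    exact this
  have hCfact : ∀ x, x ∉ S → x ∉ T → σ x ∉ A ∧ σ x ∉ B := by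
    intro x hxS hxT
    have hx1 : x ∈ ((↑S : Set α) ∪ ↑T)ᶜ := by simp [hxS, hxT]
    have hx1' : x ∉ ((↑S : Set α) ∪ ↑T) := hx1
    have e0 : (Equiv.Set.sumCompl ((↑S : Set α) ∪ ↑T)).symm x = Sum.inr ⟨x, hx1⟩ :=
      Equiv.Set.sumCompl_symm_apply_of_notMem hx1'
    have hσx : σ x = ↑(eOut ⟨x, hx1⟩) := by
      simp [hσ, e0, Equiv.sumCongr_apply, Equiv.Set.sumCompl_apply_inr]
    rw [hσx]
    have := (eOut ⟨x, hx1⟩).2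
    rw [Set.mem_compl_iff, Set.mem_union] at this
    push_neg at this
    exact ⟨by exact_mod_cast this.1, by exact_mod_cast this.2⟩
  refine ⟨σ, fun x => ⟨?_, hSfact x⟩, fun x => ⟨?_, hTfact x⟩⟩
  · intro h
    by_contra hxS
    by_cases hxT : x ∈ T
    · exact Finset.disjoint_left.1 hAB h (hTfact x hxT)
    · exact (hCfact x hxS hxT).1 h
  · intro h
    by_contra hxT
    by_cases hxS : x ∈ S
    · exact Finset.disjoint_left.1 hAB (hSfact x hxS) h
    · exact (hCfact x hxS hxT).2 h

/-! ### Part 6: transfer to canonical position -/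

lemma act_mem_canonical {ℓ r : ℕ} (ω : Config n) (σ : Equiv.Perm (Fin n))
    (S T : Finset (Fin n))
    (hA : ∀ x : Fin n, ((σ x : Fin n) : ℕ) < ℓ ↔ x ∈ S)
    (hB : ∀ x : Fin n, (ℓ ≤ ((σ x : Fin n) : ℕ) ∧ ((σ x : Fin n) : ℕ) < ℓ + r) ↔ x ∈ T)
    (hEB : ∀ i ∈ S, ∃ j ∈ T, (graph ω).Adj i j)
    (hEC : ((graph ω).induce (↑T : Set (Fin n))).Connected)
    (hED : ∀ i ∈ T, ∀ j, j ∉ S → j ∉ T → ¬ (graph ω).Adj i j) :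
    act σ ω ∈ eventB n ℓ r ∩ eventC n ℓ r ∩ eventD n ℓ r := by
  refine ⟨⟨?_, ?_⟩, ?_⟩
  · -- event B
    intro i hi
    have hx : σ.symm i ∈ S := (hA (σ.symm i)).1 (by simpa using hi)
    obtain ⟨j, hjT, hadj⟩ := hEB _ hx
    obtain ⟨hj1, hj2⟩ := (hB j).2 hjT
    exact ⟨σ j, hj1, hj2, by rw [graph_act]; simpa using hadj⟩
  · -- event C
    have hiso : (graph ω).induce (↑T : Set (Fin n)) ≃g
        (graph (act σ ω)).induce {v : Fin n | ℓ ≤ (v : ℕ) ∧ (v : ℕ) < ℓ + r} := by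
      refine ⟨Equiv.subtypeEquiv σ (fun a => ?_), ?_⟩
      · rw [Finset.mem_coe, ← hB a]; rfl
      · intro a b
        show (graph (act σ ω)).Adj (σ ↑a) (σ ↑b) ↔ (graph ω).Adj ↑a ↑b
        rw [graph_act]
        simp
    exact (SimpleGraph.Iso.connected_iff hiso).1 hEC
  · -- event D
    intro i hi1 hi2 j hj hadj
    rw [graph_act] at hadj
    have hiT : σ.symm i ∈ T := (hB _).1 (by
      simp only [Equiv.apply_symm_apply]
      exact ⟨hi1, hi2⟩)
    have hjS : σ.symm j ∉ S := by
      intro h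
      have := (hA _).2 h
      simp only [Equiv.apply_symm_apply] at this
      omega
    have hjT : σ.symm j ∉ T := by
      intro h
      have := (hB _).2 h
      simp only [Equiv.apply_symm_apply] at this
      omega
    exact hED _ hiT _ hjS hjT hadj

/-! ### Part 7: counting and the main theorem -/

lemma card_filter_lt (n ℓ : ℕ) (h : ℓ ≤ n) :
    (Finset.univ.filter (fun i : Fin n => (i : ℕ) < ℓ)).card = ℓ := by
  apply Finset.card_eq_of_bijective (fun i hi => (⟨i, lt_of_lt_of_le hi h⟩ : Fin n))
  · intro a ha
    simp only [Finset.mem_filter] at ha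
    exact ⟨(a : ℕ), ha.2, rfl⟩
  · intro i hi
    simp [hi]
  · intro i j hi hj heq
    simpa using congrArg Fin.val heq
lemma card_filter_Ico (n ℓ r : ℕ) (h : ℓ + r ≤ n) :
    (Finset.univ.filter (fun i : Fin n => ℓ ≤ (i : ℕ) ∧ (i : ℕ) < ℓ + r)).card = r := by
  apply Finset.card_eq_of_bijective (fun i hi => (⟨ℓ + i, by omega⟩ : Fin n))
  · intro a ha
    simp only [Finset.mem_filter] at ha
    refine ⟨(a : ℕ) - ℓ, by omega, ?_⟩
    ext
    simp
    omega
  · intro i hi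
    simp
    omega
  · intro i j hi hj heq
    have := congrArg Fin.val heq
    simp at this
    omega

lemma card_pairs (n ℓ r : ℕ) :
    ((Finset.univ.powersetCard ℓ : Finset (Finset (Fin n))).sigma
      (fun S => Sᶜ.powersetCard r)).card = n.choose ℓ * (n - ℓ).choose r := by
  rw [Finset.card_sigma]
  have hc : ∀ S ∈ (Finset.univ.powersetCard ℓ : Finset (Finset (Fin n))),
      (Sᶜ.powersetCard r).card = (n - ℓ).choose r := by
    intro S hS
    rw [Finset.card_powersetCard, Finset.card_compl, Fintype.card_fin,
      (Finset.mem_powersetCard.1 hS).2]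
  rw [Finset.sum_congr rfl hc, Finset.sum_const, Finset.card_powersetCard,
    Finset.card_univ, Fintype.card_fin, smul_eq_mul]

theorem union_bound_exchangeability'
    (μ : ℝ) (hμ0 : 0 < μ) (hμ1 : μ < 1)
    (n : ℕ) (hn : 2 ≤ n) (K : ℕ) (hK : 2 ≤ K) (hKn : K < n)
    (k : ℕ) (hk : 2 ≤ k) (ℓ : ℕ) (hℓ : ℓ ≤ k - 1) :
    prob n μ K {ω | ℓ < (graph ω).minDegree ∧ vertexConn (graph ω) = ℓ} ≤
      ∑ r ∈ Finset.Icc 2 ((n - ℓ) / 2),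
        (n.choose ℓ : ℝ) * ((n - ℓ).choose r : ℝ) *
          prob n μ K (eventB n ℓ r ∩ eventC n ℓ r ∩ eventD n ℓ r) := by
  classical
  have h0 : (0:ℝ) ≤ μ := le_of_lt hμ0
  have h1 : μ ≤ 1 := le_of_lt hμ1
  set gen : Finset (Fin n) → Finset (Fin n) → Set (Config n) := fun S T =>
    {ω | (∀ i ∈ S, ∃ j ∈ T, (graph ω).Adj i j) ∧
      ((graph ω).induce (↑T : Set (Fin n))).Connected ∧
      (∀ i ∈ T, ∀ j, j ∉ S → j ∉ T → ¬ (graph ω).Adj i j)} with hgen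
  set P : ℕ → Finset (Σ _ : Finset (Fin n), Finset (Fin n)) := fun r =>
    (Finset.univ.powersetCard ℓ).sigma (fun S => Sᶜ.powersetCard r) with hP
  have hsub : {ω : Config n | ℓ < (graph ω).minDegree ∧ vertexConn (graph ω) = ℓ} ⊆
      ⋃ r ∈ Finset.Icc 2 ((n - ℓ) / 2), ⋃ p ∈ P r, gen p.1 p.2 := by
    intro ω hω
    obtain ⟨r, hr2, hrle, S, T, hScard, hTcard, hdisj, hB, hC, hD⟩ :=
      key_inclusion (by omega) (graph ω) hω.1 hω.2
    refine Set.mem_iUnion₂.2 ⟨r, Finset.mem_coe.2 (Finset.mem_Icc.2 ⟨hr2, hrle⟩), ?_⟩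
    refine Set.mem_iUnion₂.2 ⟨⟨S, T⟩, ?_, ⟨hB, hC, hD⟩⟩
    simp only [hP, Finset.mem_coe, Finset.mem_sigma, Finset.mem_powersetCard]
    exact ⟨⟨Finset.subset_univ S, hScard⟩,
      fun x hx => Finset.mem_compl.2 (Finset.disjoint_right.1 hdisj hx), hTcard⟩
  have hpair : ∀ r ∈ Finset.Icc 2 ((n - ℓ) / 2), ∀ p ∈ P r,
      prob n μ K (gen p.1 p.2) ≤
        prob n μ K (eventB n ℓ r ∩ eventC n ℓ r ∩ eventD n ℓ r) := by
    intro r hr p hp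
    obtain ⟨S, T⟩ := p
    simp only [hP, Finset.mem_sigma, Finset.mem_powersetCard] at hp
    obtain ⟨⟨-, hScard⟩, hTsub, hTcard⟩ := hp
    have hln : ℓ ≤ n := by
      have := Finset.card_le_univ S
      rw [hScard] at this
      simpa using this
    have hrIcc := Finset.mem_Icc.1 hr
    have hlrn : ℓ + r ≤ n := by
      have h2 := Nat.div_le_self (n - ℓ) 2
      omega
    set A := Finset.univ.filter (fun i : Fin n => (i : ℕ) < ℓ) with hAdef
    set B := Finset.univ.filter (fun i : Fin n => ℓ ≤ (i : ℕ) ∧ (i : ℕ) < ℓ + r) with hBdef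
    have hAcard : A.card = ℓ := card_filter_lt n ℓ hln
    have hBcard : B.card = r := card_filter_Ico n ℓ r hlrn
    have hABdisj : Disjoint A B := by
      rw [Finset.disjoint_left]
      intro x hx hx'
      simp only [hAdef, hBdef, Finset.mem_filter] at hx hx'
      omega
    have hSTdisj : Disjoint S T := by
      rw [Finset.disjoint_right]
      intro x hx
      exact Finset.mem_compl.1 (hTsub hx)
    obtain ⟨σ, hσ1, hσ2⟩ := exists_perm S T A B hSTdisj hABdisj
      (by rw [hScard, hAcard]) (by rw [hTcard, hBcard])
    have hA' : ∀ x : Fin n, ((σ x : Fin n) : ℕ) < ℓ ↔ x ∈ S := by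
      intro x
      rw [← hσ1 x]
      simp [hAdef]
    have hB' : ∀ x : Fin n, (ℓ ≤ ((σ x : Fin n) : ℕ) ∧ ((σ x : Fin n) : ℕ) < ℓ + r) ↔ x ∈ T := by
      intro x
      rw [← hσ2 x]
      simp [hBdef]
    calc prob n μ K (gen S T)
        ≤ prob n μ K (act σ ⁻¹' (eventB n ℓ r ∩ eventC n ℓ r ∩ eventD n ℓ r)) := by
          apply prob_mono h0 h1
          intro ω hω
          exact act_mem_canonical ω σ S T hA' hB' hω.1 hω.2.1 hω.2.2
      _ = prob n μ K (eventB n ℓ r ∩ eventC n ℓ r ∩ eventD n ℓ r) := prob_act_preimage σ μ K _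
  calc prob n μ K {ω | ℓ < (graph ω).minDegree ∧ vertexConn (graph ω) = ℓ}
      ≤ prob n μ K (⋃ r ∈ Finset.Icc 2 ((n - ℓ) / 2), ⋃ p ∈ P r, gen p.1 p.2) :=
        prob_mono h0 h1 K hsub
    _ ≤ ∑ r ∈ Finset.Icc 2 ((n - ℓ) / 2), prob n μ K (⋃ p ∈ P r, gen p.1 p.2) :=
        prob_biUnion_le h0 h1 K _ _
    _ ≤ ∑ r ∈ Finset.Icc 2 ((n - ℓ) / 2), ∑ p ∈ P r, prob n μ K (gen p.1 p.2) :=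
        Finset.sum_le_sum (fun r _ => prob_biUnion_le h0 h1 K _ _)
    _ ≤ ∑ r ∈ Finset.Icc 2 ((n - ℓ) / 2),
          (P r).card • prob n μ K (eventB n ℓ r ∩ eventC n ℓ r ∩ eventD n ℓ r) :=
        Finset.sum_le_sum (fun r hr => Finset.sum_le_card_nsmul _ _ _ (hpair r hr))
    _ = ∑ r ∈ Finset.Icc 2 ((n - ℓ) / 2),
          (n.choose ℓ : ℝ) * ((n - ℓ).choose r : ℝ) *
            prob n μ K (eventB n ℓ r ∩ eventC n ℓ r ∩ eventD n ℓ r) := by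
        apply Finset.sum_congr rfl
        intro r _
        rw [hP]
        rw [card_pairs n ℓ r, nsmul_eq_mul]
        push_cast
        ring

/-- Union bound with exchangeability for the key events:
`P[δ > ℓ, κ_v = ℓ] ≤ ∑_{r=2}^{⌊(n-ℓ)/2⌋} C(n,ℓ) C(n-ℓ,r) P[A_{ℓ,r}]` where
`A_{ℓ,r} = B ∩ C ∩ D`. -/
theorem union_bound_exchangeability
    (μ : ℝ) (hμ0 : 0 < μ) (hμ1 : μ < 1)
    (n : ℕ) (hn : 2 ≤ n) (K : ℕ) (hK : 2 ≤ K) (hKn : K < n)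
    (k : ℕ) (hk : 2 ≤ k) (ℓ : ℕ) (hℓ : ℓ ≤ k - 1) :
    prob n μ K {ω | ℓ < (graph ω).minDegree ∧ vertexConn (graph ω) = ℓ} ≤
      ∑ r ∈ Finset.Icc 2 ((n - ℓ) / 2),
        (n.choose ℓ : ℝ) * ((n - ℓ).choose r : ℝ) *
          prob n μ K (eventB n ℓ r ∩ eventC n ℓ r ∩ eventD n ℓ r) := by
  exact union_bound_exchangeability' μ hμ0 hμ1 n hn K hK hKn k hk ℓ hℓ

end KOut
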